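/- Let p_1,…,p_2n : [0,T) → ℝ² be a solution of the planar point-vortex gradient flow. Then the function t ↦ Σ_{1 ≤ i < j ≤ 2n} |P_i(t) − P_j(t)|² is differentiable on (0,T) with derivative −2|V₀(0)|² e^{2t}. In particular this sum of squared mutual chordal distances is nonincreasing on [0,T), and it is strictly decreasing if V₀(0) ≠ 0. -/

import Mathlib

open Finset

noncomputable section

abbrev E2 := EuclideanSpace ℝ (Fin 2)
abbrev E3 := EuclideanSpace ℝ (Fin 3)

/-- Velocity field of the planar point-vortex gradient flow. -/
def pvVel {N : ℕ} (d : Fin N → ℤ) (q : Fin N → E2) (i : Fin N) : E2 :=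
  ((1 + ‖q i‖ ^ 2) ^ 2 / 2) •
    ((1 + ‖q i‖ ^ 2)⁻¹ • q i +
      (d i : ℝ) • ∑ j ∈ univ.erase i, (d j : ℝ) • (‖q i - q j‖ ^ 2)⁻¹ • (q i - q j))

/-- Inverse stereographic projection: the sphere point corresponding to `p ∈ ℝ²`. -/
def sph (p : E2) : E3 :=
  (WithLp.equiv 2 (Fin 3 → ℝ)).symm
    ![2 * p 0 / (1 + ‖p‖ ^ 2), 2 * p 1 / (1 + ‖p‖ ^ 2), (‖p‖ ^ 2 - 1) / (1 + ‖p‖ ^ 2)]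
lemma norm_sq_E2 (p : E2) : ‖p‖ ^ 2 = p 0 ^ 2 + p 1 ^ 2 := by
  rw [EuclideanSpace.norm_eq, Real.sq_sqrt (by positivity)]
  simp [Fin.sum_univ_two, sq_abs]

lemma norm_sq_E3 (p : E3) : ‖p‖ ^ 2 = p 0 ^ 2 + p 1 ^ 2 + p 2 ^ 2 := by
  rw [EuclideanSpace.norm_eq, Real.sq_sqrt (by positivity)]
  simp [Fin.sum_univ_three, sq_abs, add_assoc]

lemma upos (p : E2) : (0:ℝ) < 1 + ‖p‖ ^ 2 := by positivity

lemma sph_apply (p : E2) (k : Fin 3) :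
    sph p k = ![2 * p 0 / (1 + ‖p‖ ^ 2), 2 * p 1 / (1 + ‖p‖ ^ 2),
      (‖p‖ ^ 2 - 1) / (1 + ‖p‖ ^ 2)] k := by
  rfl

lemma sph_norm_one (p : E2) : ‖sph p‖ ^ 2 = 1 := by
  have hu := (upos p).ne'
  rw [norm_sq_E3, sph_apply, sph_apply, sph_apply]
  simp only [Matrix.cons_val_zero, Matrix.cons_val_one, Matrix.head_cons, Matrix.cons_val_two,
    Matrix.tail_cons]
  rw [norm_sq_E2] at *
  field_simp
  ring


lemma sum_swap_lt {N : ℕ} (f : Fin N → Fin N → ℝ) :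
    ∑ i, ∑ j ∈ univ.filter (fun j => j < i), f i j
      = ∑ i, ∑ j ∈ univ.filter (fun j => i < j), f j i := by
  simp only [Finset.sum_filter]
  rw [Finset.sum_comm]

lemma sum_split_lt {N : ℕ} (f : Fin N → Fin N → ℝ) (hdiag : ∀ i, f i i = 0) :
    ∑ i, ∑ j, f i j
      = (∑ i, ∑ j ∈ univ.filter (fun j => i < j), f i j)
        + ∑ i, ∑ j ∈ univ.filter (fun j => i < j), f j i := by
  have key : ∀ i j : Fin N, f i j
      = (if i < j then f i j else 0) + (if j < i then f i j else 0) := by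
    intro i j
    rcases lt_trichotomy i j with h | h | h
    · simp [h, asymm h]
    · subst h; simp [hdiag]
    · simp [h, asymm h]
  nth_rewrite 2 [← sum_swap_lt]
  simp only [Finset.sum_filter, ← Finset.sum_add_distrib]
  exact Finset.sum_congr rfl fun i _ => Finset.sum_congr rfl fun j _ => key i j

lemma two_mul_sum_lt {N : ℕ} (f : Fin N → Fin N → ℝ) (hsymm : ∀ i j, f i j = f j i)
    (hdiag : ∀ i, f i i = 0) :
    2 * (∑ i, ∑ j ∈ univ.filter (fun j => i < j), f i j) = ∑ i, ∑ j, f i j := by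
  rw [sum_split_lt f hdiag]
  have : ∀ i, ∑ j ∈ univ.filter (fun j => i < j), f j i
      = ∑ j ∈ univ.filter (fun j => i < j), f i j :=
    fun i => Finset.sum_congr rfl fun j _ => (hsymm i j).symm
  simp only [this]
  ring

lemma chordal_sum_eq {N : ℕ} (P : Fin N → EuclideanSpace ℝ (Fin 3))
    (hP : ∀ i, ‖P i‖ ^ 2 = 1) :
    ∑ i, ∑ j ∈ univ.filter (fun j => i < j), ‖P i - P j‖ ^ 2
      = (N : ℝ) ^ 2 - ‖∑ i, P i‖ ^ 2 := by
  have h2 := two_mul_sum_lt (fun i j => ‖P i - P j‖ ^ 2)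
    (fun i j => by rw [norm_sub_rev]) (fun i => by simp)
  have hinner : ‖∑ i, P i‖ ^ 2 = ∑ i, ∑ j, (inner ℝ (P i) (P j) : ℝ) := by
    rw [← real_inner_self_eq_norm_sq, sum_inner]
    simp only [inner_sum]
  have hterm : ∀ i j : Fin N, ‖P i - P j‖ ^ 2 = 2 - 2 * (inner ℝ (P i) (P j) : ℝ) := by
    intro i j; rw [norm_sub_sq_real, hP, hP]; ring
  have e1 : ∑ i : Fin N, ∑ j : Fin N, ‖P i - P j‖ ^ 2
      = 2 * (N : ℝ) ^ 2 - 2 * ∑ i, ∑ j, (inner ℝ (P i) (P j) : ℝ) := by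
    simp only [hterm, Finset.sum_sub_distrib, Finset.sum_const, Finset.card_univ,
      Fintype.card_fin, ← Finset.mul_sum, nsmul_eq_mul]
    ring
  rw [e1] at h2
  rw [hinner]
  linarith


lemma interaction_sum {N : ℕ} (d : Fin N → ℤ) (q : Fin N → E2)
    (hd1 : ∀ i, ((d i : ℝ)) ^ 2 = 1) (hds : ∑ i, (d i : ℝ) = 0)
    (hq : ∀ i j : Fin N, i ≠ j → q i ≠ q j)
    (g : E2 → E2 → ℝ) (e : E2 → ℝ)
    (hdiag : ∀ a, g a a = 0)
    (hpair : ∀ a b, a ≠ b → g a b + g b a = -(e a + e b)) :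
    ∑ i, ∑ j ∈ univ.erase i, (d i : ℝ) * (d j : ℝ) * g (q i) (q j) = ∑ i, e (q i) := by
  set F : Fin N → Fin N → ℝ := fun i j => (d i : ℝ) * (d j : ℝ) * g (q i) (q j) with hF
  set K : Fin N → Fin N → ℝ := fun i j => -((d i : ℝ) * (d j : ℝ) * (e (q i) + e (q j)))
    with hK
  have hFdiag : ∀ i, F i i = 0 := fun i => by simp [hF, hdiag]
  have herase : ∀ i, ∑ j ∈ univ.erase i, F i j = ∑ j, F i j := fun i =>
    Finset.sum_erase _ (hFdiag i)
  have h1 : ∀ i, ∑ j, (F i j + F j i) = (∑ j, K i j) + 2 * e (q i) := by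
    intro i
    rw [← Finset.sum_erase_add _ _ (Finset.mem_univ i), hFdiag i]
    have e1 : ∑ j ∈ univ.erase i, (F i j + F j i) = ∑ j ∈ univ.erase i, K i j := by
      refine Finset.sum_congr rfl fun j hj => ?_
      have hij : i ≠ j := fun h => (Finset.mem_erase.mp hj).1 h.symm
      simp only [hF, hK]
      rw [show (d j : ℝ) * (d i : ℝ) * g (q j) (q i)
          = (d i : ℝ) * (d j : ℝ) * g (q j) (q i) by ring, ← mul_add,
        hpair _ _ (hq i j hij)]
      ring
    rw [e1]
    have e2 : ∑ j ∈ univ.erase i, K i j = (∑ j, K i j) - K i i := by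
      rw [← Finset.sum_erase_add univ (K i) (Finset.mem_univ i)]; ring
    rw [e2]
    have : K i i = -2 * e (q i) := by
      simp only [hK]
      have h := hd1 i
      linear_combination (-(e (q i) + e (q i))) * h
    rw [this]; ring
  have hKz : ∑ i, ∑ j, K i j = 0 := by
    have hrow : ∀ i, ∑ j, K i j = (d i : ℝ) * -(∑ j, (d j : ℝ) * e (q j)) := by
      intro i
      have hterm : ∀ j, K i j = (-((d i : ℝ) * e (q i))) * (d j : ℝ)
          + (-(d i : ℝ)) * ((d j : ℝ) * e (q j)) := fun j => by simp only [hK]; ring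
      simp only [hterm]
      rw [Finset.sum_add_distrib, ← Finset.mul_sum, ← Finset.mul_sum, hds]
      ring
    simp only [hrow]
    rw [← Finset.sum_mul, hds, zero_mul]
  have hswap : ∑ i, ∑ j, F j i = ∑ i, ∑ j, F i j := Finset.sum_comm
  have h2 : 2 * (∑ i, ∑ j, F i j) = ∑ i, ∑ j, (F i j + F j i) := by
    simp only [Finset.sum_add_distrib]
    rw [hswap]; ring
  have h3 : ∑ i, ∑ j, (F i j + F j i) = 2 * ∑ i, e (q i) := by
    simp only [h1]
    rw [Finset.sum_add_distrib, hKz]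
    rw [← Finset.mul_sum]; ring
  refine Eq.trans (Finset.sum_congr rfl fun i _ => herase i) ?_
  linarith [h2, h3]


lemma E2_ext {a b : E2} (h0 : a 0 = b 0) (h1 : a 1 = b 1) : a = b := by
  ext k
  fin_cases k <;> assumption

def Ssq (a b : E2) : ℝ := (a 0 - b 0) ^ 2 + (a 1 - b 1) ^ 2

lemma Ssq_eq_norm (a b : E2) : Ssq a b = ‖a - b‖ ^ 2 := by
  rw [show ‖a - b‖^2 = ((a-b) 0)^2 + ((a-b) 1)^2 from by
    rw [EuclideanSpace.norm_eq, Real.sq_sqrt (by positivity)]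
    simp [Fin.sum_univ_two, sq_abs]]
  simp [Ssq, PiLp.sub_apply]

lemma Ssq_pos {a b : E2} (h : a ≠ b) : 0 < Ssq a b := by
  rw [Ssq_eq_norm]
  have : ‖a - b‖ ≠ 0 := norm_ne_zero_iff.mpr (sub_ne_zero_of_ne h)
  positivity

lemma g0_alg (x0 x1 y0 y1 : ℝ) (hS : (x0 - y0) ^ 2 + (x1 - y1) ^ 2 ≠ 0) :
    ((1 + (x0 ^ 2 + x1 ^ 2) - 2 * x0 ^ 2) * ((x0 - y0) / ((x0 - y0) ^ 2 + (x1 - y1) ^ 2))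
      - 2 * x0 * x1 * ((x1 - y1) / ((x0 - y0) ^ 2 + (x1 - y1) ^ 2)))
    + ((1 + (y0 ^ 2 + y1 ^ 2) - 2 * y0 ^ 2) * ((y0 - x0) / ((y0 - x0) ^ 2 + (y1 - x1) ^ 2))
      - 2 * y0 * y1 * ((y1 - x1) / ((y0 - x0) ^ 2 + (y1 - x1) ^ 2)))
    = -(x0 + y0) := by
  have h2 : (y0 - x0) ^ 2 + (y1 - x1) ^ 2 = (x0 - y0) ^ 2 + (x1 - y1) ^ 2 := by ring
  rw [h2]; field_simp; ring

lemma g1_alg (x0 x1 y0 y1 : ℝ) (hS : (x0 - y0) ^ 2 + (x1 - y1) ^ 2 ≠ 0) :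
    (-(2 * x0 * x1) * ((x0 - y0) / ((x0 - y0) ^ 2 + (x1 - y1) ^ 2))
      + (1 + (x0 ^ 2 + x1 ^ 2) - 2 * x1 ^ 2) * ((x1 - y1) / ((x0 - y0) ^ 2 + (x1 - y1) ^ 2)))
    + (-(2 * y0 * y1) * ((y0 - x0) / ((y0 - x0) ^ 2 + (y1 - x1) ^ 2))
      + (1 + (y0 ^ 2 + y1 ^ 2) - 2 * y1 ^ 2) * ((y1 - x1) / ((y0 - x0) ^ 2 + (y1 - x1) ^ 2)))
    = -(x1 + y1) := by
  have h2 : (y0 - x0) ^ 2 + (y1 - x1) ^ 2 = (x0 - y0) ^ 2 + (x1 - y1) ^ 2 := by ring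
  rw [h2]; field_simp; ring

lemma g2_alg (x0 x1 y0 y1 : ℝ) (hS : (x0 - y0) ^ 2 + (x1 - y1) ^ 2 ≠ 0) :
    2 * (x0 * ((x0 - y0) / ((x0 - y0) ^ 2 + (x1 - y1) ^ 2))
        + x1 * ((x1 - y1) / ((x0 - y0) ^ 2 + (x1 - y1) ^ 2)))
    + 2 * (y0 * ((y0 - x0) / ((y0 - x0) ^ 2 + (y1 - x1) ^ 2))
        + y1 * ((y1 - x1) / ((y0 - x0) ^ 2 + (y1 - x1) ^ 2)))
    = 2 := by
  have h2 : (y0 - x0) ^ 2 + (y1 - x1) ^ 2 = (x0 - y0) ^ 2 + (x1 - y1) ^ 2 := by ring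
  rw [h2]; field_simp; ring

def G0 (a b : E2) : ℝ :=
  (1 + (a 0 ^ 2 + a 1 ^ 2) - 2 * a 0 ^ 2) * ((a 0 - b 0) / Ssq a b)
    - 2 * a 0 * a 1 * ((a 1 - b 1) / Ssq a b)

def G1 (a b : E2) : ℝ :=
  -(2 * a 0 * a 1) * ((a 0 - b 0) / Ssq a b)
    + (1 + (a 0 ^ 2 + a 1 ^ 2) - 2 * a 1 ^ 2) * ((a 1 - b 1) / Ssq a b)

def G2 (a b : E2) : ℝ :=
  2 * (a 0 * ((a 0 - b 0) / Ssq a b) + a 1 * ((a 1 - b 1) / Ssq a b))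

lemma G0_diag (a : E2) : G0 a a = 0 := by simp [G0]
lemma G1_diag (a : E2) : G1 a a = 0 := by simp [G1]
lemma G2_diag (a : E2) : G2 a a = 0 := by simp [G2]

lemma G0_pair {a b : E2} (h : a ≠ b) : G0 a b + G0 b a = -(a 0 + b 0) := by
  have hS : Ssq a b ≠ 0 := (Ssq_pos h).ne'
  simp only [G0, Ssq] at hS ⊢
  exact g0_alg _ _ _ _ hS

lemma G1_pair {a b : E2} (h : a ≠ b) : G1 a b + G1 b a = -(a 1 + b 1) := by
  have hS : Ssq a b ≠ 0 := (Ssq_pos h).ne'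
  simp only [G1, Ssq] at hS ⊢
  exact g1_alg _ _ _ _ hS

lemma G2_pair {a b : E2} (h : a ≠ b) : G2 a b + G2 b a = 2 := by
  have hS : Ssq a b ≠ 0 := (Ssq_pos h).ne'
  simp only [G2, Ssq] at hS ⊢
  exact g2_alg _ _ _ _ hS

lemma proj_deriv {f : ℝ → E2} {v : E2} {s : Set ℝ} {t : ℝ} (hf : HasDerivWithinAt f v s t)
    (k : Fin 2) : HasDerivWithinAt (fun τ => f τ k) (v k) s t := by
  have := (EuclideanSpace.proj k (𝕜 := ℝ)).hasFDerivAt.comp_hasDerivWithinAt t hf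
  simpa [Function.comp_def] using this

lemma one_add_sq_ne {a b : ℝ} : 1 + (a ^ 2 + b ^ 2) ≠ 0 := by positivity

lemma u_deriv {f : ℝ → E2} {v : E2} {s : Set ℝ} {t : ℝ} (hf : HasDerivWithinAt f v s t) :
    HasDerivWithinAt (fun τ => 1 + (f τ 0 ^ 2 + f τ 1 ^ 2))
      (2 * f t 0 * v 0 + 2 * f t 1 * v 1) s t := by
  have h0 := proj_deriv hf 0
  have h1 := proj_deriv hf 1
  have := (((h0.pow 2).add (h1.pow 2)).const_add 1)
  refine this.congr_deriv ?_
  push_cast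
  ring


lemma sph0_eq (f : ℝ → E2) :
    (fun τ => sph (f τ) 0) = fun τ => 2 * f τ 0 / (1 + (f τ 0 ^ 2 + f τ 1 ^ 2)) := by
  funext τ
  rw [sph_apply, norm_sq_E2]
  simp

lemma sph1_eq (f : ℝ → E2) :
    (fun τ => sph (f τ) 1) = fun τ => 2 * f τ 1 / (1 + (f τ 0 ^ 2 + f τ 1 ^ 2)) := by
  funext τ
  rw [sph_apply, norm_sq_E2]
  simp

lemma sph2_eq (f : ℝ → E2) :
    (fun τ => sph (f τ) 2) = fun τ =>
      ((f τ 0 ^ 2 + f τ 1 ^ 2) - 1) / (1 + (f τ 0 ^ 2 + f τ 1 ^ 2)) := by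
  funext τ
  rw [sph_apply, norm_sq_E2]
  simp

lemma d0_alg (a b v0 v1 σ0 σ1 D : ℝ)
    (hv0 : v0 = ((1 + (a ^ 2 + b ^ 2)) ^ 2 / 2) * ((1 + (a ^ 2 + b ^ 2))⁻¹ * a + D * σ0))
    (hv1 : v1 = ((1 + (a ^ 2 + b ^ 2)) ^ 2 / 2) * ((1 + (a ^ 2 + b ^ 2))⁻¹ * b + D * σ1)) :
    2 * a / (1 + (a ^ 2 + b ^ 2)) - a
        + D * ((1 + (a ^ 2 + b ^ 2) - 2 * a ^ 2) * σ0 - 2 * a * b * σ1)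
      = (2 * v0 * (1 + (a ^ 2 + b ^ 2)) - 2 * a * (2 * a * v0 + 2 * b * v1))
          / (1 + (a ^ 2 + b ^ 2)) ^ 2 := by
  subst hv0 hv1
  have h : 1 + (a ^ 2 + b ^ 2) ≠ 0 := one_add_sq_ne
  field_simp
  ring

lemma d1_alg (a b v0 v1 σ0 σ1 D : ℝ)
    (hv0 : v0 = ((1 + (a ^ 2 + b ^ 2)) ^ 2 / 2) * ((1 + (a ^ 2 + b ^ 2))⁻¹ * a + D * σ0))
    (hv1 : v1 = ((1 + (a ^ 2 + b ^ 2)) ^ 2 / 2) * ((1 + (a ^ 2 + b ^ 2))⁻¹ * b + D * σ1)) :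
    2 * b / (1 + (a ^ 2 + b ^ 2)) - b
        + D * (-(2 * a * b) * σ0 + (1 + (a ^ 2 + b ^ 2) - 2 * b ^ 2) * σ1)
      = (2 * v1 * (1 + (a ^ 2 + b ^ 2)) - 2 * b * (2 * a * v0 + 2 * b * v1))
          / (1 + (a ^ 2 + b ^ 2)) ^ 2 := by
  subst hv0 hv1
  have h : 1 + (a ^ 2 + b ^ 2) ≠ 0 := one_add_sq_ne
  field_simp
  ring

lemma d2_alg (a b v0 v1 σ0 σ1 D : ℝ)
    (hv0 : v0 = ((1 + (a ^ 2 + b ^ 2)) ^ 2 / 2) * ((1 + (a ^ 2 + b ^ 2))⁻¹ * a + D * σ0))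
    (hv1 : v1 = ((1 + (a ^ 2 + b ^ 2)) ^ 2 / 2) * ((1 + (a ^ 2 + b ^ 2))⁻¹ * b + D * σ1)) :
    (a ^ 2 + b ^ 2 - 1) / (1 + (a ^ 2 + b ^ 2)) + 1 + D * (2 * (a * σ0 + b * σ1))
      = ((2 * a * v0 + 2 * b * v1) * (1 + (a ^ 2 + b ^ 2))
          - (a ^ 2 + b ^ 2 - 1) * (2 * a * v0 + 2 * b * v1))
          / (1 + (a ^ 2 + b ^ 2)) ^ 2 := by
  subst hv0 hv1
  have h : 1 + (a ^ 2 + b ^ 2) ≠ 0 := one_add_sq_ne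
  field_simp
  ring

lemma sph0_deriv {f : ℝ → E2} {v : E2} {s : Set ℝ} {t : ℝ} (hf : HasDerivWithinAt f v s t)
    (σ0 σ1 D : ℝ)
    (hv0 : v 0 = ((1 + ‖f t‖ ^ 2) ^ 2 / 2) * ((1 + ‖f t‖ ^ 2)⁻¹ * f t 0 + D * σ0))
    (hv1 : v 1 = ((1 + ‖f t‖ ^ 2) ^ 2 / 2) * ((1 + ‖f t‖ ^ 2)⁻¹ * f t 1 + D * σ1)) :
    HasDerivWithinAt (fun τ => sph (f τ) 0)
      (sph (f t) 0 - f t 0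
        + D * ((1 + ‖f t‖ ^ 2 - 2 * f t 0 ^ 2) * σ0 - 2 * f t 0 * f t 1 * σ1)) s t := by
  rw [sph0_eq]
  have hder := ((proj_deriv hf 0).const_mul 2).div (u_deriv hf)
    (one_add_sq_ne (a := f t 0) (b := f t 1))
  refine hder.congr_deriv ?_
  rw [sph_apply]
  simp only [Matrix.cons_val_zero]
  rw [norm_sq_E2] at hv0 hv1 ⊢
  exact (d0_alg _ _ _ _ _ _ _ hv0 hv1).symm

lemma sph1_deriv {f : ℝ → E2} {v : E2} {s : Set ℝ} {t : ℝ} (hf : HasDerivWithinAt f v s t)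
    (σ0 σ1 D : ℝ)
    (hv0 : v 0 = ((1 + ‖f t‖ ^ 2) ^ 2 / 2) * ((1 + ‖f t‖ ^ 2)⁻¹ * f t 0 + D * σ0))
    (hv1 : v 1 = ((1 + ‖f t‖ ^ 2) ^ 2 / 2) * ((1 + ‖f t‖ ^ 2)⁻¹ * f t 1 + D * σ1)) :
    HasDerivWithinAt (fun τ => sph (f τ) 1)
      (sph (f t) 1 - f t 1
        + D * (-(2 * f t 0 * f t 1) * σ0 + (1 + ‖f t‖ ^ 2 - 2 * f t 1 ^ 2) * σ1)) s t := by
  rw [sph1_eq]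
  have hder := ((proj_deriv hf 1).const_mul 2).div (u_deriv hf)
    (one_add_sq_ne (a := f t 0) (b := f t 1))
  refine hder.congr_deriv ?_
  rw [sph_apply]
  simp only [Matrix.cons_val_one, Matrix.head_cons, Matrix.cons_val_zero]
  rw [norm_sq_E2] at hv0 hv1 ⊢
  exact (d1_alg _ _ _ _ _ _ _ hv0 hv1).symm

lemma sph2_deriv {f : ℝ → E2} {v : E2} {s : Set ℝ} {t : ℝ} (hf : HasDerivWithinAt f v s t)
    (σ0 σ1 D : ℝ)
    (hv0 : v 0 = ((1 + ‖f t‖ ^ 2) ^ 2 / 2) * ((1 + ‖f t‖ ^ 2)⁻¹ * f t 0 + D * σ0))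
    (hv1 : v 1 = ((1 + ‖f t‖ ^ 2) ^ 2 / 2) * ((1 + ‖f t‖ ^ 2)⁻¹ * f t 1 + D * σ1)) :
    HasDerivWithinAt (fun τ => sph (f τ) 2)
      (sph (f t) 2 + 1 + D * (2 * (f t 0 * σ0 + f t 1 * σ1))) s t := by
  rw [sph2_eq]
  have hnum : HasDerivWithinAt (fun τ => f τ 0 ^ 2 + f τ 1 ^ 2 - 1)
      (2 * f t 0 * v 0 + 2 * f t 1 * v 1) s t := by
    have := (((proj_deriv hf 0).pow 2).add ((proj_deriv hf 1).pow 2)).sub_const 1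
    refine this.congr_deriv ?_
    push_cast
    ring
  have hder := hnum.div (u_deriv hf) (one_add_sq_ne (a := f t 0) (b := f t 1))
  refine hder.congr_deriv ?_
  rw [sph_apply]
  simp only [Matrix.cons_val_two, Matrix.tail_cons, Matrix.head_cons]
  rw [norm_sq_E2] at hv0 hv1 ⊢
  exact (d2_alg _ _ _ _ _ _ _ hv0 hv1).symm


lemma pvVel_apply {N : ℕ} (d : Fin N → ℤ) (q : Fin N → E2) (i : Fin N) (m : Fin 2) :
    pvVel d q i m = ((1 + ‖q i‖ ^ 2) ^ 2 / 2) *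
      ((1 + ‖q i‖ ^ 2)⁻¹ * q i m +
        (d i : ℝ) * ∑ j ∈ univ.erase i, (d j : ℝ) * ((‖q i - q j‖ ^ 2)⁻¹ * (q i m - q j m))) := by
  simp only [pvVel, PiLp.smul_apply, PiLp.add_apply, PiLp.sub_apply, smul_eq_mul]
  congr 2
  rw [show ((∑ j ∈ univ.erase i, (d j : ℝ) • (‖q i - q j‖ ^ 2)⁻¹ • (q i - q j)) m)
      = ∑ j ∈ univ.erase i, ((d j : ℝ) • (‖q i - q j‖ ^ 2)⁻¹ • (q i - q j)) m from by
    rw [WithLp.ofLp_sum, Finset.sum_apply]]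
  refine congrArg (fun z => ((d i : ℝ) * z)) (Finset.sum_congr rfl fun j _ => ?_)
  simp [PiLp.smul_apply, PiLp.sub_apply, smul_eq_mul]

lemma Vk_deriv {N : ℕ} (T : ℝ) (p : Fin N → ℝ → E2) (d : Fin N → ℤ)
    (hd1 : ∀ i, ((d i : ℝ)) ^ 2 = 1) (hds : ∑ i, (d i : ℝ) = 0)
    (hdist : ∀ t ∈ Set.Ico (0:ℝ) T, ∀ i j, i ≠ j → p i t ≠ p j t)
    (hode : ∀ t ∈ Set.Ico (0:ℝ) T, ∀ i,
      HasDerivWithinAt (p i) (pvVel d (fun j => p j t) i) (Set.Ico (0:ℝ) T) t)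
    {t : ℝ} (ht : t ∈ Set.Ico (0:ℝ) T) (k : Fin 3) :
    HasDerivWithinAt (fun τ => ∑ i, sph (p i τ) k) (∑ i, sph (p i t) k)
      (Set.Ico (0:ℝ) T) t := by
  have hq : ∀ i j, i ≠ j → p i t ≠ p j t := fun i j h => hdist t ht i j h
  set σ0 : Fin N → ℝ := fun i => ∑ j ∈ univ.erase i,
    (d j : ℝ) * ((p i t 0 - p j t 0) / Ssq (p i t) (p j t)) with hσ0
  set σ1 : Fin N → ℝ := fun i => ∑ j ∈ univ.erase i,
    (d j : ℝ) * ((p i t 1 - p j t 1) / Ssq (p i t) (p j t)) with hσ1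
  have hv0 : ∀ i, (pvVel d (fun j => p j t) i) 0
      = ((1 + ‖p i t‖ ^ 2) ^ 2 / 2) * ((1 + ‖p i t‖ ^ 2)⁻¹ * p i t 0 + (d i : ℝ) * σ0 i) := by
    intro i
    have hs : σ0 i = ∑ j ∈ univ.erase i,
        (d j : ℝ) * ((‖p i t - p j t‖ ^ 2)⁻¹ * (p i t 0 - p j t 0)) :=
      Finset.sum_congr rfl fun j _ => by rw [Ssq_eq_norm, div_eq_inv_mul]
    rw [hs, pvVel_apply]
  have hv1 : ∀ i, (pvVel d (fun j => p j t) i) 1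
      = ((1 + ‖p i t‖ ^ 2) ^ 2 / 2) * ((1 + ‖p i t‖ ^ 2)⁻¹ * p i t 1 + (d i : ℝ) * σ1 i) := by
    intro i
    have hs : σ1 i = ∑ j ∈ univ.erase i,
        (d j : ℝ) * ((‖p i t - p j t‖ ^ 2)⁻¹ * (p i t 1 - p j t 1)) :=
      Finset.sum_congr rfl fun j _ => by rw [Ssq_eq_norm, div_eq_inv_mul]
    rw [hs, pvVel_apply]
  fin_cases k
  · -- k = 0
    have hder := HasDerivWithinAt.fun_sum (u := (univ : Finset (Fin N)))
      (fun i _ => sph0_deriv (hode t ht i) (σ0 i) (σ1 i) ((d i : ℝ)) (hv0 i) (hv1 i))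
    have hGsum : ∀ i, (d i : ℝ) * ((1 + ‖p i t‖ ^ 2 - 2 * p i t 0 ^ 2) * σ0 i
        - 2 * p i t 0 * p i t 1 * σ1 i)
        = ∑ j ∈ univ.erase i, (d i : ℝ) * (d j : ℝ) * G0 (p i t) (p j t) := by
      intro i
      rw [norm_sq_E2]
      simp only [hσ0, hσ1]
      rw [Finset.mul_sum, Finset.mul_sum, ← Finset.sum_sub_distrib, Finset.mul_sum]
      refine Finset.sum_congr rfl fun j _ => ?_
      simp only [G0]
      ring
    have hIS := interaction_sum d (fun j => p j t) hd1 hds hq G0 (fun a => a 0)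
      G0_diag (fun a b h => G0_pair h)
    simp only [] at hIS
    have heq : (∑ i, (sph (p i t) 0 - p i t 0 + (d i : ℝ)
        * ((1 + ‖p i t‖ ^ 2 - 2 * p i t 0 ^ 2) * σ0 i - 2 * p i t 0 * p i t 1 * σ1 i)))
        = ∑ i, sph (p i t) 0 := by
      simp only [hGsum]
      rw [Finset.sum_add_distrib, Finset.sum_sub_distrib, hIS]
      ring
    rw [heq] at hder
    exact hder
  · -- k = 1
    have hder := HasDerivWithinAt.fun_sum (u := (univ : Finset (Fin N)))
      (fun i _ => sph1_deriv (hode t ht i) (σ0 i) (σ1 i) ((d i : ℝ)) (hv0 i) (hv1 i))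
    have hGsum : ∀ i, (d i : ℝ) * (-(2 * p i t 0 * p i t 1) * σ0 i
        + (1 + ‖p i t‖ ^ 2 - 2 * p i t 1 ^ 2) * σ1 i)
        = ∑ j ∈ univ.erase i, (d i : ℝ) * (d j : ℝ) * G1 (p i t) (p j t) := by
      intro i
      rw [norm_sq_E2]
      simp only [hσ0, hσ1]
      rw [Finset.mul_sum, Finset.mul_sum, ← Finset.sum_add_distrib, Finset.mul_sum]
      refine Finset.sum_congr rfl fun j _ => ?_
      simp only [G1]
      ring
    have hIS := interaction_sum d (fun j => p j t) hd1 hds hq G1 (fun a => a 1)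
      G1_diag (fun a b h => G1_pair h)
    simp only [] at hIS
    have heq : (∑ i, (sph (p i t) 1 - p i t 1 + (d i : ℝ)
        * (-(2 * p i t 0 * p i t 1) * σ0 i + (1 + ‖p i t‖ ^ 2 - 2 * p i t 1 ^ 2) * σ1 i)))
        = ∑ i, sph (p i t) 1 := by
      simp only [hGsum]
      rw [Finset.sum_add_distrib, Finset.sum_sub_distrib, hIS]
      ring
    rw [heq] at hder
    exact hder
  · -- k = 2
    have hder := HasDerivWithinAt.fun_sum (u := (univ : Finset (Fin N)))
      (fun i _ => sph2_deriv (hode t ht i) (σ0 i) (σ1 i) ((d i : ℝ)) (hv0 i) (hv1 i))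
    have hGsum : ∀ i, (d i : ℝ) * (2 * (p i t 0 * σ0 i + p i t 1 * σ1 i))
        = ∑ j ∈ univ.erase i, (d i : ℝ) * (d j : ℝ) * G2 (p i t) (p j t) := by
      intro i
      simp only [hσ0, hσ1]
      rw [Finset.mul_sum, Finset.mul_sum, ← Finset.sum_add_distrib, Finset.mul_sum,
        Finset.mul_sum]
      refine Finset.sum_congr rfl fun j _ => ?_
      simp only [G2]
      ring
    have hIS := interaction_sum d (fun j => p j t) hd1 hds hq G2 (fun a => (-1 : ℝ))
      G2_diag (fun a b h => by rw [G2_pair h]; ring)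
    have heq : (∑ i, (sph (p i t) 2 + 1 + (d i : ℝ)
        * (2 * (p i t 0 * σ0 i + p i t 1 * σ1 i))))
        = ∑ i, sph (p i t) 2 := by
      simp only [hGsum]
      rw [Finset.sum_add_distrib, Finset.sum_add_distrib, hIS]
      simp
    rw [heq] at hder
    exact hder

lemma exp_sol {T : ℝ} {g : ℝ → ℝ}
    (hder : ∀ t ∈ Set.Ico (0:ℝ) T, HasDerivWithinAt g (g t) (Set.Ico (0:ℝ) T) t)
    {t : ℝ} (ht : t ∈ Set.Ico (0:ℝ) T) : g t = Real.exp t * g 0 := by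
  set s : Set ℝ := Set.Ico (0:ℝ) T with hs
  have h0 : (0:ℝ) ∈ s := ⟨le_refl 0, lt_of_le_of_lt ht.1 ht.2⟩
  set h : ℝ → ℝ := fun τ => Real.exp (-τ) * g τ with hh
  have hderh : ∀ τ ∈ s, HasDerivWithinAt h 0 s τ := by
    intro τ hτ
    have hexp : HasDerivAt (fun τ : ℝ => Real.exp (-τ)) (Real.exp (-τ) * (-1)) τ :=
      (Real.hasDerivAt_exp (-τ)).comp τ (hasDerivAt_neg τ)
    have := hexp.hasDerivWithinAt.mul (hder τ hτ)
    refine this.congr_deriv ?_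
    ring
  have hdiff : DifferentiableOn ℝ h s := fun τ hτ =>
    (hderh τ hτ).differentiableWithinAt
  have hfzero : ∀ τ ∈ s, fderivWithin ℝ h s τ = 0 := by
    intro τ hτ
    have := (hderh τ hτ).hasFDerivWithinAt.fderivWithin (uniqueDiffOn_Ico 0 T τ hτ)
    rw [this]
    ext x
    simp
  have hconst : h t = h 0 := (convex_Ico 0 T).is_const_of_fderivWithin_eq_zero
    hdiff hfzero ht h0
  have := hconst
  simp only [hh, neg_zero, Real.exp_zero, one_mul] at this
  have hne : Real.exp (-t) ≠ 0 := (Real.exp_pos _).ne'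
  field_simp [Real.exp_neg] at this
  rw [← this, ← mul_assoc, ← Real.exp_add, add_neg_cancel, Real.exp_zero]
  ring


/-- Along the planar point-vortex gradient flow, the sum of squared mutual chordal
distances of the sphere points is differentiable with derivative `-2‖V₀(0)‖² e^{2t}`;
it is nonincreasing, and strictly decreasing if `V₀(0) ≠ 0`. -/
theorem sum_sq_chordal_distances_decay
    (n : ℕ) (hn : 1 ≤ n) (T : ℝ)
    (p : Fin (2 * n) → ℝ → E2) (d : Fin (2 * n) → ℤ)
    (hd : ∀ i, d i = 1 ∨ d i = -1) (hdsum : ∑ i, d i = 0)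
    (hdist : ∀ t ∈ Set.Ico (0 : ℝ) T, ∀ i j, i ≠ j → p i t ≠ p j t)
    (hode : ∀ t ∈ Set.Ico (0 : ℝ) T, ∀ i,
      HasDerivWithinAt (p i) (pvVel d (fun j => p j t) i) (Set.Ico (0 : ℝ) T) t) :
    (∀ t ∈ Set.Ioo (0 : ℝ) T,
      HasDerivAt (fun s => ∑ i, ∑ j ∈ univ.filter (fun j => i < j),
          ‖sph (p i s) - sph (p j s)‖ ^ 2)
        (-2 * ‖∑ i, sph (p i 0)‖ ^ 2 * Real.exp (2 * t)) t) ∧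
    AntitoneOn (fun s => ∑ i, ∑ j ∈ univ.filter (fun j => i < j),
        ‖sph (p i s) - sph (p j s)‖ ^ 2) (Set.Ico (0 : ℝ) T) ∧
    ((∑ i, sph (p i 0)) ≠ 0 →
      StrictAntiOn (fun s => ∑ i, ∑ j ∈ univ.filter (fun j => i < j),
          ‖sph (p i s) - sph (p j s)‖ ^ 2) (Set.Ico (0 : ℝ) T)) := by

  have hd1 : ∀ i, ((d i : ℝ)) ^ 2 = 1 := fun i => by
    rcases hd i with h | h <;> rw [h] <;> norm_num
  have hds : ∑ i, (d i : ℝ) = 0 := by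
    have := congrArg (fun z : ℤ => (z : ℝ)) hdsum
    push_cast at this
    exact this
  set c0 : ℝ := ‖∑ i, sph (p i 0)‖ ^ 2 with hc0
  have hc0nn : 0 ≤ c0 := by positivity
  -- norm of V(t)
  have hnorm : ∀ t ∈ Set.Ico (0:ℝ) T,
      ‖∑ i, sph (p i t)‖ ^ 2 = Real.exp (2 * t) * c0 := by
    intro t ht
    have hk : ∀ k : Fin 3, (∑ i, sph (p i t)) k = Real.exp t * (∑ i, sph (p i 0)) k := by
      intro k
      have happ : ∀ τ : ℝ, (∑ i, sph (p i τ)) k = ∑ i, sph (p i τ) k := fun τ => by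
        rw [WithLp.ofLp_sum, Finset.sum_apply]
      rw [happ, happ]
      exact exp_sol (fun τ hτ => Vk_deriv T p d hd1 hds hdist hode hτ k) ht
    rw [hc0, norm_sq_E3, norm_sq_E3, hk 0, hk 1, hk 2,
      show Real.exp (2 * t) = Real.exp t * Real.exp t from by rw [two_mul, Real.exp_add]]
    ring
  -- formula for the chordal sum
  have hFform : ∀ t ∈ Set.Ico (0:ℝ) T,
      (∑ i, ∑ j ∈ univ.filter (fun j => i < j), ‖sph (p i t) - sph (p j t)‖ ^ 2)
        = ((2 * n : ℕ) : ℝ) ^ 2 - Real.exp (2 * t) * c0 := by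
    intro t ht
    rw [chordal_sum_eq (fun i => sph (p i t)) (fun i => sph_norm_one (p i t)), hnorm t ht]
  refine ⟨?_, ?_, ?_⟩
  · -- derivative
    intro t ht
    have hexp : HasDerivAt (fun s : ℝ => Real.exp (2 * s)) (Real.exp (2 * t) * 2) t := by
      have := ((hasDerivAt_id t).const_mul 2).exp
      simpa [mul_comm] using this
    have hphi : HasDerivAt (fun s : ℝ => ((2 * n : ℕ) : ℝ) ^ 2 - Real.exp (2 * s) * c0)
        (-2 * c0 * Real.exp (2 * t)) t := by
      have := (hasDerivAt_const t (((2 * n : ℕ) : ℝ) ^ 2)).sub (hexp.mul_const c0)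
      refine this.congr_deriv ?_
      ring
    have hev : (fun s => ∑ i, ∑ j ∈ univ.filter (fun j => i < j),
        ‖sph (p i s) - sph (p j s)‖ ^ 2)
        =ᶠ[nhds t] (fun s : ℝ => ((2 * n : ℕ) : ℝ) ^ 2 - Real.exp (2 * s) * c0) := by
      filter_upwards [Ioo_mem_nhds ht.1 ht.2] with s hs
      exact hFform s ⟨le_of_lt hs.1, hs.2⟩
    exact hphi.congr_of_eventuallyEq hev
  · -- antitone
    intro a ha b hb hab
    simp only []
    rw [hFform a ha, hFform b hb]
    have h1 : Real.exp (2 * a) ≤ Real.exp (2 * b) := Real.exp_le_exp.mpr (by linarith)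
    nlinarith
  · -- strict antitone
    intro hV0 a ha b hb hab
    have hc0pos : 0 < c0 := by
      rw [hc0]
      have : ‖∑ i, sph (p i 0)‖ ≠ 0 := norm_ne_zero_iff.mpr hV0
      positivity
    simp only []
    rw [hFform a ha, hFform b hb]
    have h1 : Real.exp (2 * a) < Real.exp (2 * b) := Real.exp_lt_exp.mpr (by linarith)
    nlinarith
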